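/- arXiv:2004.11100 — 2 statements merged into one kernel-verified Lean document; each statement's English description precedes it below -/
import Mathlib

section
/- Let λ > 0 with θ_λ ∈ (0, π/2) defined by tan θ_λ = 1/λ, let m ∈ (0, θ_λ], let μ_D : [0, m] → [0, ∞) be continuous with μ_D(0) > 0, let (ψ, a_c) be a correction pair, and let τ : (0, m] → [0, 1) be the map sending φ to the unique a ∈ [0, 1) satisfying E(φ, a). Then (1 − τ(φ))/φ^{3/2} → √(ψ(1 − a_c)/μ_D(0)) as φ → 0⁺; equivalently, τ(φ) = 1 − √(ψ(1 − a_c)/μ_D(0)) · φ^{3/2} + o(φ^{3/2}) as φ → 0⁺. -/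
open Real Set Filter

/-- The function `g(φ) = cot φ · tan(θ − φ) + (μ_D(φ)/sin φ)(1 + cot φ · tan(θ − φ))`. -/
noncomputable def gBEM (θ : ℝ) (μD : ℝ → ℝ) (φ : ℝ) : ℝ :=
  (Real.cos φ / Real.sin φ) * Real.tan (θ - φ) +
    (μD φ / Real.sin φ) * (1 + (Real.cos φ / Real.sin φ) * Real.tan (θ - φ))

/-- The implicit equation `E(φ, a)`:
`a/(1−a) + (sin θ · sin φ / cos(θ−φ)) · ψ((a−a_c)_+)/(1−a)² = g(φ)`. -/
def EBEM (θ : ℝ) (μD ψ : ℝ → ℝ) (ac φ a : ℝ) : Prop :=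
  a / (1 - a) +
      (Real.sin θ * Real.sin φ / Real.cos (θ - φ)) * ψ (max (a - ac) 0) / (1 - a) ^ 2
    = gBEM θ μD φ

/-- The left-hand side of `E(φ, a)`. -/
noncomputable def FBEM (θ : ℝ) (ψ : ℝ → ℝ) (ac φ a : ℝ) : ℝ :=
  a / (1 - a) +
      (Real.sin θ * Real.sin φ / Real.cos (θ - φ)) * ψ (max (a - ac) 0) / (1 - a) ^ 2

lemma bem_sin_div_tendsto :
    Filter.Tendsto (fun x : ℝ => Real.sin x / x) (nhdsWithin 0 (Ioi 0)) (nhds 1) := by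
  have h := Real.hasDerivAt_sin 0
  rw [hasDerivAt_iff_tendsto_slope] at h
  have h2 : Tendsto (slope Real.sin 0) (nhdsWithin 0 (Ioi 0)) (nhds 1) := by
    simpa using h.mono_left (nhdsWithin_mono 0 (fun x (hx : x ∈ Ioi 0) => ne_of_gt (mem_Ioi.mp hx)))
  refine Tendsto.congr' ?_ h2
  filter_upwards [self_mem_nhdsWithin] with x hx
  simp [slope_def_field, div_eq_div_iff, ne_of_gt (mem_Ioi.mp hx)]

lemma bem_div_sin_tendsto :
    Filter.Tendsto (fun x : ℝ => x / Real.sin x) (nhdsWithin 0 (Ioi 0)) (nhds 1) := by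
  have h := bem_sin_div_tendsto.inv₀ one_ne_zero
  rw [inv_one] at h
  refine Tendsto.congr' ?_ h
  filter_upwards [self_mem_nhdsWithin] with x _
  rw [inv_div]

lemma bem_rpow32 {φ : ℝ} (hφ : 0 < φ) : φ ^ ((3 : ℝ) / 2) = φ * Real.sqrt φ := by
  rw [show ((3 : ℝ) / 2) = 1 + 1 / 2 by norm_num, Real.rpow_add hφ, Real.rpow_one,
    ← Real.sqrt_eq_rpow]

set_option maxHeartbeats 2000000 in
/-- Asymptotic behavior of `τ` near `0`:
`(1 − τ(φ))/φ^{3/2} → √(ψ(1 − a_c)/μ_D(0))` as `φ → 0⁺`, i.e.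
`τ(φ) = 1 − √(ψ(1 − a_c)/μ_D(0)) · φ^{3/2} + o(φ^{3/2})`. -/
theorem bem_tau_asymptotics
    (lam θ m : ℝ) (hlam : 0 < lam) (hθ : θ ∈ Ioo 0 (π / 2))
    (htan : Real.tan θ = 1 / lam) (hm : m ∈ Ioc 0 θ)
    (μD : ℝ → ℝ) (hμDc : ContinuousOn μD (Icc 0 m))
    (hμDnn : ∀ φ ∈ Icc 0 m, 0 ≤ μD φ) (hμD0 : 0 < μD 0)
    (ac : ℝ) (hac : ac ∈ Ioo (0 : ℝ) 1)
    (ψ : ℝ → ℝ) (hψc : ContinuousOn ψ (Ici 0)) (hψmono : MonotoneOn ψ (Ici 0))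
    (hψ0 : ψ 0 = 0) (hψnn : ∀ x ∈ Ici (0 : ℝ), 0 ≤ ψ x)
    (τ : ℝ → ℝ)
    (hτ : ∀ φ ∈ Ioc 0 m, τ φ ∈ Ico (0 : ℝ) 1 ∧ EBEM θ μD ψ ac φ (τ φ))
    (hτuniq : ∀ φ ∈ Ioc 0 m, ∀ a ∈ Ico (0 : ℝ) 1, EBEM θ μD ψ ac φ a → a = τ φ) :
    Filter.Tendsto (fun φ : ℝ => (1 - τ φ) / φ ^ ((3 : ℝ) / 2))
      (nhdsWithin 0 (Ioi 0)) (nhds (Real.sqrt (ψ (1 - ac) / μD 0))) := by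
  obtain ⟨hθ0, hθπ⟩ := hθ
  obtain ⟨hm0, hmθ⟩ := hm
  have hπ : (0 : ℝ) < π := Real.pi_pos
  have hcosθ : 0 < Real.cos θ := Real.cos_pos_of_mem_Ioo ⟨by linarith, hθπ⟩
  have hsinθ : 0 < Real.sin θ := Real.sin_pos_of_pos_of_lt_pi hθ0 (by linarith)
  have htanθ : 0 < Real.tan θ := by
    rw [Real.tan_eq_sin_div_cos]; exact div_pos hsinθ hcosθ
  have hψ1nn : 0 ≤ ψ (1 - ac) := hψnn _ (by simp; linarith [hac.2])
  obtain ⟨L, hLdef⟩ : ∃ L : ℝ, L = Real.sqrt (ψ (1 - ac) / μD 0) := ⟨_, rfl⟩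
  rw [← hLdef]
  have hLnn : 0 ≤ L := hLdef ▸ Real.sqrt_nonneg _
  have hL2 : L ^ 2 = ψ (1 - ac) / μD 0 :=
    hLdef ▸ Real.sq_sqrt (div_nonneg hψ1nn hμD0.le)
  have hψeq : ψ (1 - ac) = μD 0 * L ^ 2 := by rw [hL2]; field_simp
  -- basic eventual facts
  have hIoc : ∀ᶠ φ in nhdsWithin (0:ℝ) (Ioi 0), φ ∈ Ioc 0 m :=
    Ioc_mem_nhdsGT_of_mem ⟨le_refl 0, hm0⟩
  have hIoo : ∀ᶠ φ in nhdsWithin (0:ℝ) (Ioi 0), φ ∈ Ioo 0 m :=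
    Ioo_mem_nhdsGT_of_mem ⟨le_refl 0, hm0⟩
  -- basic tendsto facts
  have tφ : Tendsto (fun φ : ℝ => φ) (nhdsWithin (0:ℝ) (Ioi 0)) (nhds 0) :=
    Filter.tendsto_id.mono_left nhdsWithin_le_nhds
  have tsqrt : Tendsto (fun φ : ℝ => Real.sqrt φ) (nhdsWithin (0:ℝ) (Ioi 0)) (nhds 0) := by
    have := (Real.continuous_sqrt.tendsto 0).mono_left
      (nhdsWithin_le_nhds : nhdsWithin (0:ℝ) (Ioi 0) ≤ nhds 0)
    simpa using this
  have tcos : Tendsto (fun φ : ℝ => Real.cos φ) (nhdsWithin (0:ℝ) (Ioi 0)) (nhds 1) := by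
    have := (Real.continuous_cos.tendsto 0).mono_left
      (nhdsWithin_le_nhds : nhdsWithin (0:ℝ) (Ioi 0) ≤ nhds 0)
    simpa using this
  have tθφ : Tendsto (fun φ : ℝ => θ - φ) (nhdsWithin (0:ℝ) (Ioi 0)) (nhds θ) := by
    have := (tendsto_const_nhds : Tendsto (fun _ : ℝ => θ) (nhdsWithin (0:ℝ) (Ioi 0)) (nhds θ)).sub tφ
    simpa using this
  have ttan : Tendsto (fun φ : ℝ => Real.tan (θ - φ)) (nhdsWithin (0:ℝ) (Ioi 0))
      (nhds (Real.tan θ)) :=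
    ((Real.continuousAt_tan.mpr hcosθ.ne').tendsto).comp tθφ
  have tcosθφ : Tendsto (fun φ : ℝ => Real.cos (θ - φ)) (nhdsWithin (0:ℝ) (Ioi 0))
      (nhds (Real.cos θ)) :=
    (Real.continuous_cos.tendsto θ).comp tθφ
  have tsd : Tendsto (fun φ : ℝ => Real.sin φ / φ) (nhdsWithin (0:ℝ) (Ioi 0)) (nhds 1) :=
    bem_sin_div_tendsto
  have tds : Tendsto (fun φ : ℝ => φ / Real.sin φ) (nhdsWithin (0:ℝ) (Ioi 0)) (nhds 1) :=
    bem_div_sin_tendsto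
  have tμ : Tendsto μD (nhdsWithin (0:ℝ) (Ioi 0)) (nhds (μD 0)) := by
    have h1 : Tendsto μD (nhdsWithin (0:ℝ) (Icc 0 m)) (nhds (μD 0)) :=
      (hμDc 0 ⟨le_refl 0, hm0.le⟩).tendsto
    refine h1.mono_left ?_
    rw [← nhdsWithin_Ioc_eq_nhdsGT hm0]
    exact nhdsWithin_mono 0 Ioc_subset_Icc_self
  -- positivity of sin φ and cos (θ - φ) on (0, m]
  have hpos : ∀ φ ∈ Ioc 0 m, 0 < Real.sin φ ∧ 0 < Real.cos (θ - φ) := by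
    intro φ hφ
    constructor
    · exact Real.sin_pos_of_pos_of_lt_pi hφ.1 (by linarith [hφ.2])
    · exact Real.cos_pos_of_mem_Ioo ⟨by linarith [hφ.2], by linarith [hφ.1]⟩
  -- limit of φ² g(φ)
  have tg : Tendsto (fun φ : ℝ => φ ^ 2 * gBEM θ μD φ) (nhdsWithin (0:ℝ) (Ioi 0))
      (nhds (μD 0 * Real.tan θ)) := by
    have key : ∀ᶠ φ in nhdsWithin (0:ℝ) (Ioi 0),
        (φ / Real.sin φ) * Real.cos φ * Real.tan (θ - φ) * φ +
          μD φ * ((φ / Real.sin φ) *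
            (φ + (φ / Real.sin φ) * Real.cos φ * Real.tan (θ - φ)))
        = φ ^ 2 * gBEM θ μD φ := by
      filter_upwards [hIoc] with φ hφ
      have hs := (hpos φ hφ).1
      unfold gBEM
      field_simp
    have h := ((((tds.mul tcos).mul ttan).mul tφ).add
      (tμ.mul (tds.mul (tφ.add ((tds.mul tcos).mul ttan)))))
    have h2 := h.congr' key
    simpa using h2
  -- limit of φ² F(φ, 1 - c φ^{3/2})
  have tF : ∀ c : ℝ, 0 < c →
      Tendsto (fun φ : ℝ => φ ^ 2 * FBEM θ ψ ac φ (1 - c * φ ^ ((3:ℝ)/2)))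
        (nhdsWithin (0:ℝ) (Ioi 0)) (nhds (Real.tan θ * ψ (1 - ac) / c ^ 2)) := by
    intro c hc
    have hψat : ContinuousAt ψ (1 - ac) :=
      hψc.continuousAt (Ici_mem_nhds (by linarith [hac.2]))
    have targ : Tendsto (fun φ : ℝ => max (1 - c * (φ * Real.sqrt φ) - ac) 0)
        (nhdsWithin (0:ℝ) (Ioi 0)) (nhds (1 - ac)) := by
      have h1 : Tendsto (fun φ : ℝ => 1 - c * (φ * Real.sqrt φ) - ac)
          (nhdsWithin (0:ℝ) (Ioi 0)) (nhds (1 - ac)) := by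
        have hconst1 : Tendsto (fun _ : ℝ => (1:ℝ)) (nhdsWithin (0:ℝ) (Ioi 0)) (nhds 1) :=
          tendsto_const_nhds
        have hconstac : Tendsto (fun _ : ℝ => ac) (nhdsWithin (0:ℝ) (Ioi 0)) (nhds ac) :=
          tendsto_const_nhds
        have := (hconst1.sub ((tφ.mul tsqrt).const_mul c)).sub hconstac
        simpa using this
      have h2 := h1.max (tendsto_const_nhds : Tendsto (fun _ : ℝ => (0:ℝ)) _ _)
      rwa [max_eq_left (by linarith [hac.2])] at h2
    have tψ : Tendsto (fun φ : ℝ => ψ (max (1 - c * (φ * Real.sqrt φ) - ac) 0))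
        (nhdsWithin (0:ℝ) (Ioi 0)) (nhds (ψ (1 - ac))) :=
      hψat.tendsto.comp targ
    have key : ∀ᶠ φ in nhdsWithin (0:ℝ) (Ioi 0),
        Real.sqrt φ * (1 - c * (φ * Real.sqrt φ)) / c +
          (Real.sin θ * (Real.sin φ / φ) / Real.cos (θ - φ)) *
            ψ (max (1 - c * (φ * Real.sqrt φ) - ac) 0) / c ^ 2
        = φ ^ 2 * FBEM θ ψ ac φ (1 - c * φ ^ ((3:ℝ)/2)) := by
      filter_upwards [hIoc] with φ hφ
      obtain ⟨hs, hcφ⟩ := hpos φ hφ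
      have hφ0 : 0 < φ := hφ.1
      rw [FBEM, bem_rpow32 hφ0]
      set s := Real.sqrt φ with hsdef
      have hs0 : 0 < s := Real.sqrt_pos.mpr hφ0
      have hsφ : s ^ 2 = φ := Real.sq_sqrt hφ0.le
      rw [← hsφ]
      have hsne : s ≠ 0 := hs0.ne'
      have hcne : c ≠ 0 := hc.ne'
      have hcosne : Real.cos (θ - s ^ 2) ≠ 0 := by rw [hsφ]; exact hcφ.ne'
      have hDne : 1 - (1 - c * (s ^ 2 * s)) ≠ 0 := by
        have : (0:ℝ) < c * (s ^ 2 * s) := by positivity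
        intro h; nlinarith [this]
      field_simp [hsne, hcne, hcosne]
      ring
    have tconst1 : Tendsto (fun _ : ℝ => (1:ℝ)) (nhdsWithin (0:ℝ) (Ioi 0)) (nhds 1) :=
      tendsto_const_nhds
    have tsθ : Tendsto (fun _ : ℝ => Real.sin θ) (nhdsWithin (0:ℝ) (Ioi 0))
        (nhds (Real.sin θ)) := tendsto_const_nhds
    have h := ((tsqrt.mul (tconst1.sub
        ((tφ.mul tsqrt).const_mul c))).div_const c).add
      ((((tsθ.mul tsd).div tcosθφ hcosθ.ne').mul tψ).div_const (c ^ 2))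
    have h2 := h.congr' key
    have : (0 : ℝ) * (1 - c * (0 * 0)) / c +
        Real.sin θ * 1 / Real.cos θ * ψ (1 - ac) / c ^ 2
        = Real.tan θ * ψ (1 - ac) / c ^ 2 := by
      rw [Real.tan_eq_sin_div_cos]; ring
    rwa [this] at h2
  -- monotonicity of F in a
  have hFmono : ∀ φ ∈ Ioc 0 m, ∀ a b : ℝ, 0 ≤ a → a ≤ b → b < 1 →
      FBEM θ ψ ac φ a ≤ FBEM θ ψ ac φ b := by
    intro φ hφ a b ha hab hb1
    have ha1 : a < 1 := lt_of_le_of_lt hab hb1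
    obtain ⟨hs, hcφ⟩ := hpos φ hφ
    have hK : 0 ≤ Real.sin θ * Real.sin φ / Real.cos (θ - φ) :=
      div_nonneg (mul_nonneg hsinθ.le hs.le) hcφ.le
    have h1 : a / (1 - a) ≤ b / (1 - b) := by
      rw [div_le_div_iff₀ (by linarith) (by linarith)]; nlinarith
    have hmemA : max (a - ac) 0 ∈ Ici (0:ℝ) := mem_Ici.mpr (le_max_right _ _)
    have hmemB : max (b - ac) 0 ∈ Ici (0:ℝ) := mem_Ici.mpr (le_max_right _ _)
    have hψle : ψ (max (a - ac) 0) ≤ ψ (max (b - ac) 0) :=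
      hψmono hmemA hmemB (max_le_max (by linarith) le_rfl)
    have h2 : Real.sin θ * Real.sin φ / Real.cos (θ - φ) * ψ (max (a - ac) 0) / (1 - a) ^ 2
        ≤ Real.sin θ * Real.sin φ / Real.cos (θ - φ) * ψ (max (b - ac) 0) / (1 - b) ^ 2 := by
      apply div_le_div₀ (mul_nonneg hK (hψnn _ hmemB))
        (mul_le_mul_of_nonneg_left hψle hK) (pow_pos (by linarith) 2)
      exact pow_le_pow_left₀ (by linarith) (by linarith) 2
    exact add_le_add h1 h2
  -- comparison lemmas
  have hcmp_lt : ∀ φ ∈ Ioc 0 m, ∀ a : ℝ, 0 ≤ a → a < 1 →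
      FBEM θ ψ ac φ a < gBEM θ μD φ → a < τ φ := by
    intro φ hφ a ha0 ha1 hlt
    by_contra h
    push_neg at h
    obtain ⟨hτm, hτE⟩ := hτ φ hφ
    have hE : FBEM θ ψ ac φ (τ φ) = gBEM θ μD φ := hτE
    have := hFmono φ hφ (τ φ) a hτm.1 h ha1
    linarith
  have hcmp_gt : ∀ φ ∈ Ioc 0 m, ∀ a : ℝ, 0 ≤ a → a < 1 →
      gBEM θ μD φ < FBEM θ ψ ac φ a → τ φ < a := by
    intro φ hφ a ha0 ha1 hlt
    by_contra h
    push_neg at h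
    obtain ⟨hτm, hτE⟩ := hτ φ hφ
    have hE : FBEM θ ψ ac φ (τ φ) = gBEM θ μD φ := hτE
    have := hFmono φ hφ a (τ φ) ha0 h hτm.2
    linarith
  -- small-φ fact: c φ^{3/2} < 1/2 eventually
  have tX : Tendsto (fun φ : ℝ => φ ^ ((3:ℝ)/2)) (nhdsWithin (0:ℝ) (Ioi 0)) (nhds 0) := by
    have h := tφ.mul tsqrt
    rw [show (0:ℝ) * 0 = 0 by ring] at h
    refine h.congr' ?_
    filter_upwards [self_mem_nhdsWithin] with φ hφ
    exact (bem_rpow32 hφ).symm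
  -- main ε argument
  rw [Metric.tendsto_nhds]
  intro ε hε
  -- upper bound: (1 - τ φ)/φ^{3/2} < L + ε eventually
  have hub : ∀ᶠ φ in nhdsWithin (0:ℝ) (Ioi 0), (1 - τ φ) / φ ^ ((3:ℝ)/2) < L + ε := by
    have hc1 : 0 < L + ε := by linarith
    have hval : Real.tan θ * ψ (1 - ac) / (L + ε) ^ 2 < μD 0 * Real.tan θ := by
      rw [div_lt_iff₀ (pow_pos hc1 2), hψeq]
      have h2 : L ^ 2 < (L + ε) ^ 2 := by
        linarith [mul_nonneg hLnn hε.le, pow_pos hε 2, sq_nonneg (L + ε), sq_nonneg L,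
          mul_pos hε hε]
      nlinarith [mul_lt_mul_of_pos_left h2 (mul_pos htanθ hμD0)]
    have hev := (tF (L + ε) hc1).eventually_lt tg hval
    have hsm := tX.eventually_lt_const (show (0:ℝ) < 1 / (2 * (L + ε)) by positivity)
    filter_upwards [hev, hIoc, hsm] with φ hφlt hφm hφsm
    have hφ0 : 0 < φ := hφm.1
    have hX : 0 < φ ^ ((3:ℝ)/2) := Real.rpow_pos_of_pos hφ0 _
    have hF : FBEM θ ψ ac φ (1 - (L + ε) * φ ^ ((3:ℝ)/2)) < gBEM θ μD φ :=
      lt_of_mul_lt_mul_left hφlt (sq_nonneg φ)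
    have hsm2 : (L + ε) * φ ^ ((3:ℝ)/2) < 1 / 2 := by
      calc (L + ε) * φ ^ ((3:ℝ)/2) < (L + ε) * (1 / (2 * (L + ε))) :=
            mul_lt_mul_of_pos_left hφsm hc1
        _ = 1 / 2 := by field_simp
    have ha0 : 0 ≤ 1 - (L + ε) * φ ^ ((3:ℝ)/2) := by linarith
    have ha1 : 1 - (L + ε) * φ ^ ((3:ℝ)/2) < 1 := by nlinarith
    have hτgt := hcmp_lt φ hφm _ ha0 ha1 hF
    rw [div_lt_iff₀ hX]
    linarith
  -- lower bound: L - ε < (1 - τ φ)/φ^{3/2} eventually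
  have hlb : ∀ᶠ φ in nhdsWithin (0:ℝ) (Ioi 0), L - ε < (1 - τ φ) / φ ^ ((3:ℝ)/2) := by
    rcases le_or_gt L ε with h | h
    · filter_upwards [hIoc] with φ hφm
      have hφ0 : 0 < φ := hφm.1
      have hX : 0 < φ ^ ((3:ℝ)/2) := Real.rpow_pos_of_pos hφ0 _
      have hτ1 := (hτ φ hφm).1.2
      have : 0 < (1 - τ φ) / φ ^ ((3:ℝ)/2) := div_pos (by linarith) hX
      linarith
    · have hc2 : 0 < L - ε := by linarith
      have hval : μD 0 * Real.tan θ < Real.tan θ * ψ (1 - ac) / (L - ε) ^ 2 := by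
        rw [lt_div_iff₀ (pow_pos hc2 2), hψeq]
        have h2 : (L - ε) ^ 2 < L ^ 2 := by nlinarith [mul_pos hc2 hε, mul_pos hε hε]
        nlinarith [mul_lt_mul_of_pos_left h2 (mul_pos htanθ hμD0)]
      have hev := tg.eventually_lt (tF (L - ε) hc2) hval
      have hsm := tX.eventually_lt_const (show (0:ℝ) < 1 / (2 * (L - ε)) by positivity)
      filter_upwards [hev, hIoc, hsm] with φ hφlt hφm hφsm
      have hφ0 : 0 < φ := hφm.1
      have hX : 0 < φ ^ ((3:ℝ)/2) := Real.rpow_pos_of_pos hφ0 _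
      have hF : gBEM θ μD φ < FBEM θ ψ ac φ (1 - (L - ε) * φ ^ ((3:ℝ)/2)) :=
        lt_of_mul_lt_mul_left hφlt (sq_nonneg φ)
      have hsm2 : (L - ε) * φ ^ ((3:ℝ)/2) < 1 / 2 := by
        calc (L - ε) * φ ^ ((3:ℝ)/2) < (L - ε) * (1 / (2 * (L - ε))) :=
              mul_lt_mul_of_pos_left hφsm hc2
          _ = 1 / 2 := by field_simp
      have ha0 : 0 ≤ 1 - (L - ε) * φ ^ ((3:ℝ)/2) := by linarith
      have ha1 : 1 - (L - ε) * φ ^ ((3:ℝ)/2) < 1 := by nlinarith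
      have hτlt := hcmp_gt φ hφm _ ha0 ha1 hF
      rw [lt_div_iff₀ hX]
      linarith
  filter_upwards [hub, hlb] with φ h1 h2
  rw [Real.dist_eq, abs_lt]
  constructor <;> linarith
end

section
/- Let λ > 0 with θ_λ ∈ (0, π/2) defined by tan θ_λ = 1/λ. Let μ_L, μ_D : (0, θ_λ] → [0, ∞) be continuously differentiable, non-negative and non-decreasing, with M := sup_{(0,θ_λ]} μ_L' < ∞, M_D := sup_{(0,θ_λ]} μ_D' < ∞ and m' := inf_{(0,θ_λ]} μ_L'; assume tan θ_λ · (1 + M_D) < m' and D(φ) := max{0, −μ_G'(φ)} + M + (1 + tan² θ_λ) μ_D(φ) > 0 for all φ ∈ (0, θ_λ]. Fix ε ∈ (0, 1), set ρ_ε(φ) := ε/D(φ) and f(φ) := φ + ρ_ε(φ)(μ_G(φ) − μ_L(φ) + tan(θ_λ − φ) μ_D(φ)); suppose {φ ∈ (0, θ_λ] : μ_L(φ) − tan(θ_λ − φ) μ_D(φ) = μ_G(φ)} is non-empty with maximum φ*, and define φ⁰ = θ_λ, φ^{k+1} = f(φ^k). Then with C := 1 − ε (m' − tan θ_λ (1 +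 M_D)) / (M + sin θ_λ + (1 + tan² θ_λ) μ_D(θ_λ)), one has C ∈ [0, 1) and |φ^k − φ*| ≤ C^k (θ_λ − φ*) for all k ∈ ℕ. -/
open Real Set

/-- The macroscopic function `μ_G(φ) = sin φ · tan (θ − φ)`. -/
noncomputable def muG (θ φ : ℝ) : ℝ := Real.sin φ * Real.tan (θ - φ)

/-- The derivative of `μ_G`: `μ_G'(φ) = cos φ · tan(θ − φ) − sin φ / cos²(θ − φ)`. -/
noncomputable def muGderiv (θ φ : ℝ) : ℝ :=
  Real.cos φ * Real.tan (θ - φ) - Real.sin φ / Real.cos (θ - φ) ^ 2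

lemma hasDerivAt_muGderiv (θ φ : ℝ) (h : Real.cos (θ - φ) ≠ 0) :
    HasDerivAt (muGderiv θ)
      (-Real.sin φ * Real.tan (θ - φ) - 2 * Real.cos φ / Real.cos (θ - φ) ^ 2
        + 2 * Real.sin φ * Real.sin (θ - φ) / Real.cos (θ - φ) ^ 3) φ := by
  have hlin : HasDerivAt (fun x : ℝ => θ - x) (-1) φ := by
    simpa using (hasDerivAt_id φ).const_sub θ
  have htan : HasDerivAt (fun x : ℝ => Real.tan (θ - x))
      (1 / Real.cos (θ - φ) ^ 2 * (-1)) φ :=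
    (Real.hasDerivAt_tan h).comp φ hlin
  have hcos2 : HasDerivAt (fun x : ℝ => Real.cos (θ - x) ^ 2)
      (2 * Real.cos (θ - φ) ^ 1 * ((-Real.sin (θ - φ)) * (-1))) φ :=
    (((Real.hasDerivAt_cos (θ - φ)).comp φ hlin)).pow 2
  have h2 : Real.cos (θ - φ) ^ 2 ≠ 0 := pow_ne_zero 2 h
  have hdiv : HasDerivAt (fun x : ℝ => Real.sin x / Real.cos (θ - x) ^ 2)
      ((Real.cos φ * Real.cos (θ - φ) ^ 2 -
        Real.sin φ * (2 * Real.cos (θ - φ) ^ 1 * ((-Real.sin (θ - φ)) * (-1)))) /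
        (Real.cos (θ - φ) ^ 2) ^ 2) φ :=
    (Real.hasDerivAt_sin φ).div hcos2 h2
  have hprod : HasDerivAt (fun x : ℝ => Real.cos x * Real.tan (θ - x))
      (-Real.sin φ * Real.tan (θ - φ) +
        Real.cos φ * (1 / Real.cos (θ - φ) ^ 2 * (-1))) φ :=
    (Real.hasDerivAt_cos φ).mul htan
  have := hprod.sub hdiv
  refine HasDerivAt.congr_deriv this ?_
  field_simp
  ring

/-- `cos (θ - φ) > 0` for `φ ∈ [0, θ]`, `θ ∈ (0, π/2)`. -/
lemma cos_sub_pos' {θ φ : ℝ} (hθ : θ ∈ Ioo 0 (π / 2)) (h0 : 0 ≤ φ) (h1 : φ ≤ θ) :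
    0 < Real.cos (θ - φ) := by
  apply Real.cos_pos_of_mem_Ioo
  constructor
  · nlinarith [Real.pi_pos, hθ.1, hθ.2]
  · nlinarith [hθ.2]

/-- `muGderiv θ` is antitone on `[0, θ]`. -/
lemma antitoneOn_muGderiv {θ : ℝ} (hθ : θ ∈ Ioo 0 (π / 2)) :
    AntitoneOn (muGderiv θ) (Icc 0 θ) := by
  have hconv : Convex ℝ (Icc (0:ℝ) θ) := convex_Icc 0 θ
  have hder : ∀ x ∈ Icc (0:ℝ) θ, HasDerivAt (muGderiv θ)
      (-Real.sin x * Real.tan (θ - x) - 2 * Real.cos x / Real.cos (θ - x) ^ 2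
        + 2 * Real.sin x * Real.sin (θ - x) / Real.cos (θ - x) ^ 3) x := fun x hx =>
    hasDerivAt_muGderiv θ x (cos_sub_pos' hθ hx.1 hx.2).ne'
  apply antitoneOn_of_deriv_nonpos hconv
  · intro x hx
    exact (hder x hx).differentiableAt.continuousAt.continuousWithinAt
  · intro x hx
    exact ((hder x (interior_subset hx)).differentiableAt).differentiableWithinAt
  · intro x hx
    rw [interior_Icc] at hx
    have hxmem : x ∈ Icc (0:ℝ) θ := ⟨hx.1.le, hx.2.le⟩
    rw [(hder x hxmem).deriv]
    have hb : 0 < Real.cos (θ - x) := cos_sub_pos' hθ hx.1.le hx.2.le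
    have hs : 0 ≤ Real.sin x := Real.sin_nonneg_of_nonneg_of_le_pi hx.1.le
      (by nlinarith [Real.pi_pos, hθ.2, hx.2])
    have hc : 0 < Real.cos x := Real.cos_pos_of_mem_Ioo
      ⟨by nlinarith [Real.pi_pos, hx.1], by nlinarith [hθ.2, hx.2]⟩
    have ha : 0 ≤ Real.sin (θ - x) := Real.sin_nonneg_of_nonneg_of_le_pi
      (by linarith [hx.2]) (by nlinarith [Real.pi_pos, hθ.2, hx.1])
    have htannn : 0 ≤ Real.tan (θ - x) := Real.tan_nonneg_of_nonneg_of_le_pi_div_two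
      (by linarith [hx.2]) (by linarith [hθ.2, hx.1])
    have hcosθ : (0:ℝ) < Real.cos θ := Real.cos_pos_of_mem_Ioo
      ⟨by nlinarith [Real.pi_pos, hθ.1], hθ.2⟩
    have hsacb : Real.sin x * Real.sin (θ - x) ≤ Real.cos x * Real.cos (θ - x) := by
      have hid : Real.cos θ = Real.cos x * Real.cos (θ - x)
          - Real.sin x * Real.sin (θ - x) := by
        rw [← Real.cos_add]; ring_nf
      linarith
    have h1 : 2 * Real.sin x * Real.sin (θ - x) / Real.cos (θ - x) ^ 3
        ≤ 2 * Real.cos x / Real.cos (θ - x) ^ 2 := by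
      rw [div_le_div_iff₀ (by positivity) (by positivity)]
      nlinarith [hsacb, pow_pos hb 2, pow_pos hb 3]
    nlinarith [mul_nonneg hs htannn, h1]

/-- On `(0, θ]`, `-muGderiv θ φ ≤ sin θ`. -/
lemma neg_muGderiv_le_sin {θ φ : ℝ} (hθ : θ ∈ Ioo 0 (π / 2)) (hφ : φ ∈ Ioc 0 θ) :
    -muGderiv θ φ ≤ Real.sin θ := by
  have hb : 0 < Real.cos (θ - φ) := cos_sub_pos' hθ hφ.1.le hφ.2
  have ha : 0 ≤ Real.sin (θ - φ) := Real.sin_nonneg_of_nonneg_of_le_pi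
    (by linarith [hφ.2]) (by nlinarith [Real.pi_pos, hθ.2, hφ.1])
  have hs : 0 ≤ Real.sin φ := Real.sin_nonneg_of_nonneg_of_le_pi hφ.1.le
    (by nlinarith [Real.pi_pos, hθ.2, hφ.2])
  have hc : 0 ≤ Real.cos φ := le_of_lt <| Real.cos_pos_of_mem_Ioo
    ⟨by nlinarith [Real.pi_pos, hφ.1], by nlinarith [hθ.2, hφ.2]⟩
  have hsb : Real.sin φ ≤ Real.cos (θ - φ) := by
    rw [← Real.sin_pi_div_two_sub]
    apply Real.strictMonoOn_sin.monotoneOn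
    · constructor <;> nlinarith [Real.pi_pos, hθ.2, hφ.1, hφ.2]
    · constructor <;> nlinarith [Real.pi_pos, hθ.2, hφ.1, hφ.2]
    · nlinarith [hθ.2]
  have hac : Real.sin (θ - φ) ≤ Real.cos φ := by
    rw [← Real.sin_pi_div_two_sub]
    apply Real.strictMonoOn_sin.monotoneOn
    · constructor <;> nlinarith [Real.pi_pos, hθ.2, hφ.1, hφ.2]
    · constructor <;> nlinarith [Real.pi_pos, hθ.2, hφ.1, hφ.2]
    · nlinarith [hθ.2]
  have hsinθ : Real.sin θ = Real.sin (θ - φ) * Real.cos φ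
      + Real.cos (θ - φ) * Real.sin φ := by
    rw [← Real.sin_add]; ring_nf
  set a := Real.sin (θ - φ) with hadef
  set b := Real.cos (θ - φ) with hbdef
  set s := Real.sin φ with hsdef
  set c := Real.cos φ with hcdef
  have hpy : a ^ 2 + b ^ 2 = 1 := Real.sin_sq_add_cos_sq (θ - φ)
  have hb1 : b ≤ 1 := Real.cos_le_one _
  have hb2 : (0:ℝ) < b ^ 2 := by positivity
  have hb3 : 0 ≤ 1 - b ^ 3 := by nlinarith
  have k0 : s * (1 - b ^ 3) ≤ b * (1 - b ^ 3) := mul_le_mul_of_nonneg_right hsb hb3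
  have k1 : b * (1 - b ^ 3) ≤ a * c * b * (1 + b) := by
    have h1b : (0:ℝ) < 1 + b := by linarith
    refine le_of_mul_le_mul_right ?_ h1b
    have e1 : b * (1 - b ^ 3) * (1 + b) = b * (a ^ 2 * (1 + b + b ^ 2)) := by
      nlinarith [hpy]
    rw [e1]
    have k2 : a ^ 2 * (1 + b + b ^ 2) ≤ a * c * (1 + b) * (1 + b) := by
      nlinarith [mul_nonneg ha hb.le, mul_le_mul_of_nonneg_left hac ha,
        mul_nonneg (mul_nonneg ha hc) hb.le,
        mul_nonneg (mul_nonneg (mul_nonneg ha hc) hb.le) hb.le]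
    calc b * (a ^ 2 * (1 + b + b ^ 2)) ≤ b * (a * c * (1 + b) * (1 + b)) :=
          mul_le_mul_of_nonneg_left k2 hb.le
      _ = a * c * b * (1 + b) * (1 + b) := by ring
  have key : s - c * a * b ≤ (a * c + b * s) * b ^ 2 := by nlinarith [k0, k1]
  rw [muGderiv, Real.tan_eq_sin_div_cos]
  rw [hsinθ]
  rw [neg_sub]
  have heq : s / b ^ 2 - c * (a / b) = (s - c * a * b) / b ^ 2 := by
    field_simp
  rw [heq, div_le_iff₀ hb2]
  linarith [key]

lemma muGderiv_le_tan {θ φ : ℝ} (hθ : θ ∈ Ioo 0 (π / 2)) (hφ : φ ∈ Ioc 0 θ) :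
    muGderiv θ φ ≤ Real.tan θ := by
  have hb : 0 < Real.cos (θ - φ) := cos_sub_pos' hθ hφ.1.le hφ.2
  have hs : 0 ≤ Real.sin φ := Real.sin_nonneg_of_nonneg_of_le_pi hφ.1.le
    (by nlinarith [Real.pi_pos, hθ.2, hφ.2])
  have htannn : 0 ≤ Real.tan (θ - φ) := Real.tan_nonneg_of_nonneg_of_le_pi_div_two
    (by linarith [hφ.2]) (by linarith [hθ.2, hφ.1])
  have htanle : Real.tan (θ - φ) ≤ Real.tan θ :=
    le_of_lt (Real.tan_lt_tan_of_nonneg_of_lt_pi_div_two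
      (by linarith [hφ.2]) hθ.2 (by linarith [hφ.1]))
  have hcle : Real.cos φ ≤ 1 := Real.cos_le_one φ
  have hdivnn : 0 ≤ Real.sin φ / Real.cos (θ - φ) ^ 2 := by positivity
  have hcnn : 0 ≤ Real.cos φ := le_of_lt <| Real.cos_pos_of_mem_Ioo
    ⟨by nlinarith [Real.pi_pos, hφ.1], by nlinarith [hθ.2, hφ.2]⟩
  rw [muGderiv]
  nlinarith [mul_le_mul_of_nonneg_right hcle htannn]

lemma deriv_nonneg_of_monotoneOn {f f' : ℝ → ℝ} {θ x : ℝ}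
    (hd : HasDerivAt f (f' x) x) (hmono : MonotoneOn f (Ioc 0 θ))
    (hx : x ∈ Ioc (0:ℝ) θ) : 0 ≤ f' x := by
  have hd' : HasDerivWithinAt f (f' x) (Ioo 0 x) x := hd.hasDerivWithinAt
  rw [hasDerivWithinAt_iff_tendsto_slope] at hd'
  have hss : Ioo (0:ℝ) x \ {x} = Ioo 0 x := by
    ext y
    simp only [Set.mem_diff, Set.mem_Ioo, Set.mem_singleton_iff]
    constructor
    · rintro ⟨h1, _⟩; exact h1
    · rintro ⟨h1, h2⟩; exact ⟨⟨h1, h2⟩, ne_of_lt h2⟩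
  rw [hss] at hd'
  have hne : (nhdsWithin x (Ioo (0:ℝ) x)).NeBot := by
    rw [← mem_closure_iff_nhdsWithin_neBot, closure_Ioo hx.1.ne]
    exact ⟨hx.1.le, le_refl x⟩
  refine ge_of_tendsto hd' ?_
  filter_upwards [self_mem_nhdsWithin] with y hy
  rw [slope_def_field]
  have hyx : y < x := hy.2
  have hfle : f y ≤ f x := hmono ⟨hy.1, le_trans hyx.le hx.2⟩ hx hyx.le
  rw [div_nonneg_iff]
  right
  exact ⟨by linarith, by linarith⟩

set_option maxHeartbeats 1600000 in
/-- Rate of convergence of the damped fixed-point iteration: with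
`C = 1 − ε (m' − tan θ (1 + M_D)) / (M + sin θ + (1 + tan²θ) μ_D(θ))` one has `C ∈ [0, 1)`
and `|φ^k − φ*| ≤ C^k (θ − φ*)` for all `k`. -/
theorem bem_fixed_point_rate
    (lam θ : ℝ) (hlam : 0 < lam) (hθ : θ ∈ Ioo 0 (π / 2))
    (htan : Real.tan θ = 1 / lam)
    (μL μD μL' μD' : ℝ → ℝ)
    (hμLd : ∀ φ ∈ Ioc 0 θ, HasDerivAt μL (μL' φ) φ)
    (hμDd : ∀ φ ∈ Ioc 0 θ, HasDerivAt μD (μD' φ) φ)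
    (hμL'c : ContinuousOn μL' (Ioc 0 θ)) (hμD'c : ContinuousOn μD' (Ioc 0 θ))
    (hμLnn : ∀ φ ∈ Ioc 0 θ, 0 ≤ μL φ) (hμDnn : ∀ φ ∈ Ioc 0 θ, 0 ≤ μD φ)
    (hμLmono : MonotoneOn μL (Ioc 0 θ)) (hμDmono : MonotoneOn μD (Ioc 0 θ))
    (M MD m' : ℝ)
    (hM : IsLUB (μL' '' Ioc 0 θ) M)
    (hMD : IsLUB (μD' '' Ioc 0 θ) MD)
    (hm' : IsGLB (μL' '' Ioc 0 θ) m')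
    (hcond : Real.tan θ * (1 + MD) < m')
    (hD : ∀ φ ∈ Ioc 0 θ,
      0 < max 0 (-(muGderiv θ φ)) + M + (1 + Real.tan θ ^ 2) * μD φ)
    (ε : ℝ) (hε : ε ∈ Ioo (0 : ℝ) 1)
    (seq : ℕ → ℝ) (hseq0 : seq 0 = θ)
    (hseqrec : ∀ k : ℕ, seq (k + 1)
      = seq k +
        (ε / (max 0 (-(muGderiv θ (seq k))) + M + (1 + Real.tan θ ^ 2) * μD (seq k))) *
          (muG θ (seq k) - μL (seq k) + Real.tan (θ - seq k) * μD (seq k)))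
    (φs : ℝ)
    (hφs : IsGreatest {φ ∈ Ioc 0 θ | μL φ - Real.tan (θ - φ) * μD φ = muG θ φ} φs) :
    (1 - ε * (m' - Real.tan θ * (1 + MD)) /
        (M + Real.sin θ + (1 + Real.tan θ ^ 2) * μD θ)) ∈ Ico (0 : ℝ) 1 ∧
    ∀ k : ℕ, |seq k - φs| ≤
      (1 - ε * (m' - Real.tan θ * (1 + MD)) /
        (M + Real.sin θ + (1 + Real.tan θ ^ 2) * μD θ)) ^ k * (θ - φs) := by
  obtain ⟨hθ0, hθ2⟩ := hθ
  obtain ⟨hε0, hε1⟩ := hε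
  have hφsmem : φs ∈ Ioc 0 θ := hφs.1.1
  have hφseq : μL φs - Real.tan (θ - φs) * μD φs = muG θ φs := hφs.1.2
  have hθmem : θ ∈ Ioc 0 θ := ⟨hθ0, le_refl θ⟩
  have hcosθ : 0 < Real.cos θ :=
    Real.cos_pos_of_mem_Ioo ⟨by nlinarith [Real.pi_pos], hθ2⟩
  have hsinθ : 0 < Real.sin θ :=
    Real.sin_pos_of_pos_of_lt_pi hθ0 (by nlinarith [Real.pi_pos])
  have htanθ : 0 < Real.tan θ := Real.tan_pos_of_pos_of_lt_pi_div_two hθ0 hθ2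
  have hsec : 1 + Real.tan θ ^ 2 = 1 / Real.cos θ ^ 2 := by
    rw [Real.tan_eq_sin_div_cos]
    field_simp
    exact cos_sq_add_sin_sq θ
  have hsecb : ∀ ξ ∈ Ioc 0 θ, 1 / Real.cos (θ - ξ) ^ 2 ≤ 1 + Real.tan θ ^ 2 := by
    intro ξ hξ
    have h1 : Real.cos θ ≤ Real.cos (θ - ξ) :=
      Real.cos_le_cos_of_nonneg_of_le_pi (by linarith [hξ.2])
        (by nlinarith [Real.pi_pos]) (by linarith [hξ.1])
    rw [hsec]
    exact one_div_le_one_div_of_le (by positivity) (by nlinarith)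
  have htannn : ∀ ξ ∈ Ioc 0 θ, 0 ≤ Real.tan (θ - ξ) := fun ξ hξ =>
    Real.tan_nonneg_of_nonneg_of_le_pi_div_two (by linarith [hξ.2]) (by linarith [hξ.1])
  have htanle : ∀ ξ ∈ Ioc 0 θ, Real.tan (θ - ξ) ≤ Real.tan θ := fun ξ hξ =>
    le_of_lt (Real.tan_lt_tan_of_nonneg_of_lt_pi_div_two
      (by linarith [hξ.2]) hθ2 (by linarith [hξ.1]))
  have hμD'nn : ∀ x ∈ Ioc 0 θ, 0 ≤ μD' x := fun x hx =>
    deriv_nonneg_of_monotoneOn (hμDd x hx) hμDmono hx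
  have hμD'le : ∀ x ∈ Ioc 0 θ, μD' x ≤ MD := fun x hx =>
    hMD.1 (Set.mem_image_of_mem μD' hx)
  have hμL'ge : ∀ x ∈ Ioc 0 θ, m' ≤ μL' x := fun x hx =>
    hm'.1 (Set.mem_image_of_mem μL' hx)
  have hμL'le : ∀ x ∈ Ioc 0 θ, μL' x ≤ M := fun x hx =>
    hM.1 (Set.mem_image_of_mem μL' hx)
  have hMD0 : 0 ≤ MD := le_trans (hμD'nn θ hθmem) (hμD'le θ hθmem)
  have hm'M : m' ≤ M := le_trans (hμL'ge θ hθmem) (hμL'le θ hθmem)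
  have hμDθ : 0 ≤ μD θ := hμDnn θ hθmem
  set c := m' - Real.tan θ * (1 + MD) with hcdef
  clear_value c
  have hc : 0 < c := by rw [hcdef]; linarith [hcond]
  have htp : 0 ≤ Real.tan θ * (1 + MD) := mul_nonneg htanθ.le (by linarith)
  have hcm : c ≤ m' := by rw [hcdef]; linarith
  set Dmax := M + Real.sin θ + (1 + Real.tan θ ^ 2) * μD θ with hDmaxdef
  clear_value Dmax
  have hMpos : 0 < M := lt_of_lt_of_le (lt_of_le_of_lt htp hcond) hm'M
  have hDmaxpos : 0 < Dmax := by
    have h1 : 0 ≤ (1 + Real.tan θ ^ 2) * μD θ := by positivity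
    rw [hDmaxdef]; linarith
  have hcDmax : c ≤ Dmax := by
    have h1 : 0 ≤ (1 + Real.tan θ ^ 2) * μD θ := by positivity
    rw [hDmaxdef]; linarith
  set C := 1 - ε * c / Dmax with hCdef
  clear_value C
  have hC0 : 0 ≤ C := by
    have h1 : ε * c ≤ Dmax := by nlinarith
    have h2 := (div_le_one hDmaxpos).mpr h1
    rw [hCdef]; linarith
  have hC1 : C < 1 := by
    have h1 : 0 < ε * c / Dmax := div_pos (mul_pos hε0 hc) hDmaxpos
    rw [hCdef]; linarith
  have hDle : ∀ φ ∈ Ioc 0 θ,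
      max 0 (-(muGderiv θ φ)) + M + (1 + Real.tan θ ^ 2) * μD φ ≤ Dmax := by
    intro φ hφ
    have h1 : max 0 (-(muGderiv θ φ)) ≤ Real.sin θ :=
      max_le hsinθ.le (neg_muGderiv_le_sin ⟨hθ0, hθ2⟩ hφ)
    have h2 : μD φ ≤ μD θ := hμDmono hφ hθmem hφ.2
    have h3 : (0:ℝ) < 1 + Real.tan θ ^ 2 := by positivity
    rw [hDmaxdef]
    nlinarith
  set g : ℝ → ℝ := fun φ => μL φ - Real.tan (θ - φ) * μD φ - muG θ φ with hgdef
  clear_value g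
  have hgφs : g φs = 0 := by
    simp only [hgdef]
    rw [sub_eq_zero]
    exact hφseq
  have hgd : ∀ ξ ∈ Ioc 0 θ, HasDerivAt g
      (μL' ξ + μD ξ / Real.cos (θ - ξ) ^ 2 - Real.tan (θ - ξ) * μD' ξ - muGderiv θ ξ)
      ξ := by
    intro ξ hξ
    have hcos : Real.cos (θ - ξ) ≠ 0 := (cos_sub_pos' ⟨hθ0, hθ2⟩ hξ.1.le hξ.2).ne'
    have hlin : HasDerivAt (fun x : ℝ => θ - x) (-1) ξ := by
      simpa using (hasDerivAt_id ξ).const_sub θ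
    have htand : HasDerivAt (fun x : ℝ => Real.tan (θ - x))
        (1 / Real.cos (θ - ξ) ^ 2 * (-1)) ξ := (Real.hasDerivAt_tan hcos).comp ξ hlin
    have h1 : HasDerivAt (fun x => Real.tan (θ - x) * μD x)
        (1 / Real.cos (θ - ξ) ^ 2 * (-1) * μD ξ + Real.tan (θ - ξ) * μD' ξ) ξ :=
      htand.mul (hμDd ξ hξ)
    have h2 : HasDerivAt (fun x => muG θ x)
        (Real.cos ξ * Real.tan (θ - ξ) + Real.sin ξ * (1 / Real.cos (θ - ξ) ^ 2 * (-1)))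
        ξ := by
      have := (Real.hasDerivAt_sin ξ).mul htand
      exact this
    have h3 := ((hμLd ξ hξ).sub h1).sub h2
    rw [hgdef]
    refine HasDerivAt.congr_deriv h3 ?_
    rw [muGderiv]
    field_simp
    ring
  have hglow : ∀ ξ ∈ Ioc 0 θ, c ≤
      μL' ξ + μD ξ / Real.cos (θ - ξ) ^ 2 - Real.tan (θ - ξ) * μD' ξ - muGderiv θ ξ := by
    intro ξ hξ
    have h1 := hμL'ge ξ hξ
    have h2 : 0 ≤ μD ξ / Real.cos (θ - ξ) ^ 2 := div_nonneg (hμDnn ξ hξ) (by positivity)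
    have h3 : Real.tan (θ - ξ) * μD' ξ ≤ Real.tan θ * MD :=
      mul_le_mul (htanle ξ hξ) (hμD'le ξ hξ) (hμD'nn ξ hξ) htanθ.le
    have h4 := muGderiv_le_tan ⟨hθ0, hθ2⟩ hξ
    have h5 : c = m' - Real.tan θ - Real.tan θ * MD := by rw [hcdef]; ring
    linarith
  have hgup : ∀ φ ∈ Ioc 0 θ, ∀ ξ ∈ Ioc 0 θ, ξ ≤ φ →
      μL' ξ + μD ξ / Real.cos (θ - ξ) ^ 2 - Real.tan (θ - ξ) * μD' ξ - muGderiv θ ξ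
        ≤ max 0 (-(muGderiv θ φ)) + M + (1 + Real.tan θ ^ 2) * μD φ := by
    intro φ hφ ξ hξ hle
    have h1 := hμL'le ξ hξ
    have h2 : μD ξ / Real.cos (θ - ξ) ^ 2 ≤ (1 + Real.tan θ ^ 2) * μD φ := by
      have ha := hμDnn ξ hξ
      have hbb := hμDmono hξ hφ hle
      have hc2 := hsecb ξ hξ
      have hd2 : μD ξ / Real.cos (θ - ξ) ^ 2 = (1 / Real.cos (θ - ξ) ^ 2) * μD ξ := by
        ring
      rw [hd2]
      exact mul_le_mul hc2 hbb ha (by positivity)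
    have h3 : 0 ≤ Real.tan (θ - ξ) * μD' ξ := mul_nonneg (htannn ξ hξ) (hμD'nn ξ hξ)
    have h4 : -muGderiv θ ξ ≤ max 0 (-(muGderiv θ φ)) := by
      have h5 : muGderiv θ φ ≤ muGderiv θ ξ :=
        antitoneOn_muGderiv ⟨hθ0, hθ2⟩ ⟨hξ.1.le, hξ.2⟩ ⟨le_trans hξ.1.le hle, hφ.2⟩ hle
      have h6 : -muGderiv θ ξ ≤ -muGderiv θ φ := by linarith
      exact le_trans h6 (le_max_right _ _)
    linarith
  have key : ∀ φ, φs ≤ φ → φ ≤ θ →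
      c * (φ - φs) ≤ g φ ∧
      g φ ≤ (max 0 (-(muGderiv θ φ)) + M + (1 + Real.tan θ ^ 2) * μD φ) * (φ - φs) := by
    intro φ h1 h2
    have hφmem : φ ∈ Ioc 0 θ := ⟨lt_of_lt_of_le hφsmem.1 h1, h2⟩
    rcases eq_or_lt_of_le h1 with heq | hlt
    · constructor <;> simp [← heq, hgφs]
    · have hcont : ContinuousOn g (Icc φs φ) := by
        intro x hx
        have hxm : x ∈ Ioc 0 θ := ⟨lt_of_lt_of_le hφsmem.1 hx.1, le_trans hx.2 h2⟩
        exact ((hgd x hxm).differentiableAt.continuousAt).continuousWithinAt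
      obtain ⟨ξ, hξ, hslope⟩ := exists_hasDerivAt_eq_slope g
        (fun ξ => μL' ξ + μD ξ / Real.cos (θ - ξ) ^ 2 - Real.tan (θ - ξ) * μD' ξ
          - muGderiv θ ξ) hlt hcont
        (fun x hx => hgd x ⟨lt_trans hφsmem.1 hx.1, le_trans hx.2.le h2⟩)
      have hξm : ξ ∈ Ioc 0 θ := ⟨lt_trans hφsmem.1 hξ.1, le_trans hξ.2.le h2⟩
      rw [hgφs, sub_zero] at hslope
      have hpos : 0 < φ - φs := by linarith
      have hl := hglow ξ hξm
      have hu := hgup φ hφmem ξ hξm hξ.2.le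
      rw [hslope] at hl hu
      exact ⟨(le_div_iff₀ hpos).mp hl, (div_le_iff₀ hpos).mp hu⟩
  have main : ∀ k : ℕ, φs ≤ seq k ∧ seq k ≤ θ ∧ seq k - φs ≤ C ^ k * (θ - φs) := by
    intro k
    induction k with
    | zero => rw [hseq0]; exact ⟨hφsmem.2, le_refl θ, by simp⟩
    | succ k ih =>
      obtain ⟨h1, h2, h3⟩ := ih
      have hφmem : seq k ∈ Ioc 0 θ := ⟨lt_of_lt_of_le hφsmem.1 h1, h2⟩
      set Dk := max 0 (-(muGderiv θ (seq k))) + M + (1 + Real.tan θ ^ 2) * μD (seq k)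
        with hDk
      clear_value Dk
      have hDφpos : 0 < Dk := by rw [hDk]; exact hD (seq k) hφmem
      have hDφle : Dk ≤ Dmax := by rw [hDk]; exact hDle (seq k) hφmem
      obtain ⟨hgl, hgu'⟩ := key (seq k) h1 h2
      have hgu : g (seq k) ≤ Dk * (seq k - φs) := by rw [hDk]; exact hgu'
      have hrec : seq (k + 1) = seq k - ε / Dk * g (seq k) := by
        rw [hseqrec k, ← hDk]
        simp only [hgdef]
        ring
      have hεDpos : 0 < ε / Dk := div_pos hε0 hDφpos
      have hgnn : 0 ≤ g (seq k) :=
        le_trans (mul_nonneg hc.le (by linarith)) hgl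
      have hub : ε / Dk * g (seq k) ≤ ε * (seq k - φs) := by
        calc ε / Dk * g (seq k) ≤ ε / Dk * (Dk * (seq k - φs)) :=
              mul_le_mul_of_nonneg_left hgu hεDpos.le
          _ = ε * (seq k - φs) := by
            field_simp
      have hlb : ε / Dmax * (c * (seq k - φs)) ≤ ε / Dk * g (seq k) := by
        refine mul_le_mul ?_ hgl (mul_nonneg hc.le (by linarith)) hεDpos.le
        exact div_le_div_of_nonneg_left hε0.le hDφpos hDφle
      have h8 : 0 ≤ (1 - ε) * (seq k - φs) :=
        mul_nonneg (by linarith) (by linarith)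
      refine ⟨?_, ?_, ?_⟩
      · rw [hrec]; linarith only [hub, h8]
      · rw [hrec]
        have h9 := mul_nonneg hεDpos.le hgnn
        linarith only [h9, h2]
      · rw [hrec]
        have h6 : C * (seq k - φs) ≤ C ^ (k + 1) * (θ - φs) := by
          calc C * (seq k - φs) ≤ C * (C ^ k * (θ - φs)) :=
                mul_le_mul_of_nonneg_left h3 hC0
            _ = C ^ (k + 1) * (θ - φs) := by ring
        have h7 : ε / Dmax * (c * (seq k - φs)) = ε * c / Dmax * (seq k - φs) := by
          ring
        nth_rewrite 1 [hCdef] at h6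
        linarith only [hlb, h6, h7]
  refine ⟨⟨hC0, hC1⟩, ?_⟩
  intro k
  obtain ⟨h1, h2, h3⟩ := main k
  rw [abs_of_nonneg (by linarith)]
  exact h3
end
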